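/- Let 𝕜 be a commutative ring, k ≥ 2, and R = 𝕜[x_1,…,x_k]/(x_1x_2⋯x_k). Fix 2 ≤ i ≤ k and 1 ≤ j ≤ k, and let π : R/(x_{[1,i]}) → R/(x_{[1,i−1]}) be the canonical surjection. Consider the R-linear map Hom_R(R/(x_{[1,i−1]}), R/(x_{[1,j]})) → Hom_R(R/(x_{[1,i]}), R/(x_{[1,j]})) given by precomposition with π. Then its cokernel is isomorphic, as an R-module, to R/(x_i) if j ≥ i, and is zero if j < i. -/
import Mathlib


open MvPolynomial

/-- The ring `R = 𝕜[x₁,…,x_k]/(x₁x₂⋯x_k)`, with variables indexed by `Fin k`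
(the variable `x_m` of the paper, `1 ≤ m ≤ k`, corresponds to `m - 1 : Fin k`). -/
abbrev NodalRing (𝕜 : Type*) [CommRing 𝕜] (k : ℕ) : Type _ :=
  MvPolynomial (Fin k) 𝕜 ⧸
    Ideal.span {∏ i : Fin k, (X i : MvPolynomial (Fin k) 𝕜)}

/-- `x_{[a,b]}`: the image in `R` of the monomial `∏_{a ≤ m ≤ b} x_m`
(an empty product is `1`). -/
noncomputable def xIcc (𝕜 : Type*) [CommRing 𝕜] (k a b : ℕ) : NodalRing 𝕜 k :=
  Ideal.Quotient.mk _
    (∏ t ∈ Finset.univ.filter (fun t : Fin k => a ≤ (t : ℕ) + 1 ∧ (t : ℕ) + 1 ≤ b),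
      X t)

namespace Stmt12Aux

variable (𝕜 : Type*) [CommRing 𝕜] (k : ℕ)

/-- the monomial `x_{[a,b]}` in the polynomial ring. -/
noncomputable def P (a b : ℕ) : MvPolynomial (Fin k) 𝕜 :=
  ∏ t ∈ Finset.univ.filter (fun t : Fin k => a ≤ (t : ℕ) + 1 ∧ (t : ℕ) + 1 ≤ b), X t

variable {𝕜 k}

lemma xIcc_eq (a b : ℕ) : xIcc 𝕜 k a b = Ideal.Quotient.mk _ (P 𝕜 k a b) := rfl

lemma P_split {a b c : ℕ} (hab : a ≤ b + 1) (hbc : b ≤ c) :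
    P 𝕜 k a b * P 𝕜 k (b + 1) c = P 𝕜 k a c := by
  rw [P, P, P, ← Finset.prod_union]
  · apply Finset.prod_congr _ (fun _ _ => rfl)
    ext t
    simp only [Finset.mem_union, Finset.mem_filter, Finset.mem_univ, true_and]
    omega
  · rw [Finset.disjoint_left]
    intro t ht ht'
    simp only [Finset.mem_filter, Finset.mem_univ, true_and] at ht ht'
    omega

lemma P_single {i : ℕ} (h1 : 1 ≤ i) (h2 : i ≤ k) :
    P 𝕜 k i i = X (⟨i - 1, by omega⟩ : Fin k) := by
  rw [P, show Finset.univ.filter (fun t : Fin k => i ≤ (t : ℕ) + 1 ∧ (t : ℕ) + 1 ≤ i)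
      = {(⟨i - 1, by omega⟩ : Fin k)} from ?_, Finset.prod_singleton]
  ext t
  simp only [Finset.mem_filter, Finset.mem_univ, true_and, Finset.mem_singleton, Fin.ext_iff]
  omega

lemma P_full : P 𝕜 k 1 k = ∏ t : Fin k, X t := by
  rw [P, Finset.filter_true_of_mem]
  intro t _
  exact ⟨Nat.le_add_left 1 t, t.isLt⟩

lemma P_regular {a b : ℕ} {f g : MvPolynomial (Fin k) 𝕜}
    (h : f * P 𝕜 k a b = g * P 𝕜 k a b) : f = g :=
  (isRegular_prod_X _).right h

lemma mk_mem_span_iff {b : ℕ} (hb : b ≤ k) {a : MvPolynomial (Fin k) 𝕜} :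
    (Ideal.Quotient.mk _ a : NodalRing 𝕜 k) ∈
      Ideal.span {(Ideal.Quotient.mk _ (P 𝕜 k 1 b) : NodalRing 𝕜 k)} ↔
    ∃ r, a = r * P 𝕜 k 1 b := by
  have hfull : P 𝕜 k 1 b * P 𝕜 k (b + 1) k = ∏ t : Fin k, (X t : MvPolynomial (Fin k) 𝕜) := by
    rw [P_split (Nat.le_add_left 1 b) hb]
    exact P_full
  rw [Ideal.mem_span_singleton]
  constructor
  · rintro ⟨c, hc⟩
    obtain ⟨r, rfl⟩ := Ideal.Quotient.mk_surjective (I := Ideal.span {∏ i : Fin k, (X i : MvPolynomial (Fin k) 𝕜)}) c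
    rw [← map_mul, Ideal.Quotient.eq, Ideal.mem_span_singleton] at hc
    obtain ⟨s, hs⟩ := hc
    refine ⟨r + s * P 𝕜 k (b + 1) k, ?_⟩
    have h2 : a - P 𝕜 k 1 b * r = P 𝕜 k 1 b * P 𝕜 k (b + 1) k * s := by
      rw [hfull]; exact hs
    linear_combination h2
  · rintro ⟨r, rfl⟩
    exact ⟨Ideal.Quotient.mk _ r, by rw [← map_mul, mul_comm]⟩


variable (𝕜 k) in
/-- `R/(x_{[1,b]})` as an `R`-module. -/
noncomputable abbrev Mq (b : ℕ) : Type _ := NodalRing 𝕜 k ⧸ Ideal.span {xIcc 𝕜 k 1 b}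

lemma smul_qmk {b : ℕ} (r s : MvPolynomial (Fin k) 𝕜) :
    (Ideal.Quotient.mk _ r : NodalRing 𝕜 k) •
      (Submodule.Quotient.mk (Ideal.Quotient.mk _ s) : Mq 𝕜 k b) =
    Submodule.Quotient.mk (Ideal.Quotient.mk _ (r * s)) := by
  rw [← Submodule.Quotient.mk_smul, smul_eq_mul, ← map_mul]

lemma qmk_eq_iff {b : ℕ} (hb : b ≤ k) {u v : MvPolynomial (Fin k) 𝕜} :
    (Submodule.Quotient.mk (Ideal.Quotient.mk _ u) : Mq 𝕜 k b) =
      Submodule.Quotient.mk (Ideal.Quotient.mk _ v) ↔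
    ∃ r, u - v = r * P 𝕜 k 1 b := by
  rw [Submodule.Quotient.eq, ← map_sub]
  exact mk_mem_span_iff hb

lemma qmk_eq_zero_iff {b : ℕ} (hb : b ≤ k) {u : MvPolynomial (Fin k) 𝕜} :
    (Submodule.Quotient.mk (Ideal.Quotient.mk _ u) : Mq 𝕜 k b) = 0 ↔
    ∃ r, u = r * P 𝕜 k 1 b := by
  rw [Submodule.Quotient.mk_eq_zero]
  exact mk_mem_span_iff hb

/-- the `R`-linear map `R/(x_{[1,b]}) → R/(x_{[1,c]})` given by multiplication by `q`. -/
noncomputable def mulMap (q : MvPolynomial (Fin k) 𝕜) {b c : ℕ} (hc : c ≤ k)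
    (h : ∃ r, q * P 𝕜 k 1 b = r * P 𝕜 k 1 c) :
    Mq 𝕜 k b →ₗ[NodalRing 𝕜 k] Mq 𝕜 k c :=
  Submodule.liftQ _
    ((Ideal.span {xIcc 𝕜 k 1 c}).mkQ ∘ₗ
      LinearMap.mulLeft (NodalRing 𝕜 k) (Ideal.Quotient.mk _ q))
    (by
      rw [Ideal.span_le, Set.singleton_subset_iff]
      simp only [SetLike.mem_coe, LinearMap.mem_ker, LinearMap.comp_apply,
        LinearMap.mulLeft_apply, Submodule.mkQ_apply,
        xIcc_eq, ← map_mul]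
      show (Submodule.Quotient.mk (Ideal.Quotient.mk _ (q * P 𝕜 k 1 b)) : Mq 𝕜 k c) = 0
      rw [qmk_eq_zero_iff hc]
      exact h)

lemma mulMap_apply (q : MvPolynomial (Fin k) 𝕜) {b c : ℕ} (hc : c ≤ k)
    (h : ∃ r, q * P 𝕜 k 1 b = r * P 𝕜 k 1 c) (s : MvPolynomial (Fin k) 𝕜) :
    mulMap q hc h (Submodule.Quotient.mk (Ideal.Quotient.mk _ s)) =
      Submodule.Quotient.mk (Ideal.Quotient.mk _ (q * s)) := by
  rw [mulMap, Submodule.liftQ_apply]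
  simp only [LinearMap.comp_apply, LinearMap.mulLeft_apply, ← map_mul]
  rfl


lemma Mq_surj {b : ℕ} (x : Mq 𝕜 k b) :
    ∃ u : MvPolynomial (Fin k) 𝕜,
      Submodule.Quotient.mk (Ideal.Quotient.mk _ u) = x := by
  obtain ⟨s, rfl⟩ := Submodule.Quotient.mk_surjective _ x
  obtain ⟨u, rfl⟩ := Ideal.Quotient.mk_surjective
    (I := Ideal.span {∏ t : Fin k, (X t : MvPolynomial (Fin k) 𝕜)}) s
  exact ⟨u, rfl⟩

lemma apply_qmk {b : ℕ} {M : Type*} [AddCommGroup M] [Module (NodalRing 𝕜 k) M]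
    (φ : Mq 𝕜 k b →ₗ[NodalRing 𝕜 k] M) (s : MvPolynomial (Fin k) 𝕜) :
    φ (Submodule.Quotient.mk (Ideal.Quotient.mk _ s)) =
      (Ideal.Quotient.mk _ s : NodalRing 𝕜 k) •
        φ (Submodule.Quotient.mk (Ideal.Quotient.mk _ 1)) := by
  rw [← map_smul]
  congr 1
  rw [← Submodule.Quotient.mk_smul, smul_eq_mul, map_one, mul_one]

lemma qmk_P_eq_zero {b : ℕ} (hb : b ≤ k) :
    (Submodule.Quotient.mk (Ideal.Quotient.mk _ (P 𝕜 k 1 b)) : Mq 𝕜 k b) = 0 :=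
  (qmk_eq_zero_iff hb).mpr ⟨1, (one_mul _).symm⟩

end Stmt12Aux


set_option maxHeartbeats 1600000 in
set_option synthInstance.maxHeartbeats 1000000 in
open Stmt12Aux in
/-- **Components `(P̄_i)_{[1,j]}` of the modules `P̄_i`.**
For `2 ≤ i ≤ k` and `1 ≤ j ≤ k`, the cokernel of precomposition with the
canonical projection `π : R/(x_{[1,i]}) → R/(x_{[1,i-1]})`, as a map
`Hom_R(R/(x_{[1,i-1]}), R/(x_{[1,j]})) → Hom_R(R/(x_{[1,i]}), R/(x_{[1,j]}))`,
is isomorphic to `R/(x_i)` if `j ≥ i`, and is zero if `j < i`. -/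
theorem stmt_12 (𝕜 : Type*) [CommRing 𝕜] (k : ℕ) (hk : 2 ≤ k)
    (i j : ℕ) (hi : 2 ≤ i) (hik : i ≤ k) (hj : 1 ≤ j) (hjk : j ≤ k) :
    ∃ (π : (NodalRing 𝕜 k ⧸ Ideal.span {xIcc 𝕜 k 1 i}) →ₗ[NodalRing 𝕜 k]
          (NodalRing 𝕜 k ⧸ Ideal.span {xIcc 𝕜 k 1 (i - 1)}))
      (T : ((NodalRing 𝕜 k ⧸ Ideal.span {xIcc 𝕜 k 1 (i - 1)}) →ₗ[NodalRing 𝕜 k]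
              (NodalRing 𝕜 k ⧸ Ideal.span {xIcc 𝕜 k 1 j})) →ₗ[NodalRing 𝕜 k]
           ((NodalRing 𝕜 k ⧸ Ideal.span {xIcc 𝕜 k 1 i}) →ₗ[NodalRing 𝕜 k]
              (NodalRing 𝕜 k ⧸ Ideal.span {xIcc 𝕜 k 1 j}))),
      (∀ s : NodalRing 𝕜 k,
        π (Submodule.Quotient.mk s) = Submodule.Quotient.mk s) ∧
      (∀ φ, T φ = φ.comp π) ∧
      (i ≤ j → Nonempty
        (((((NodalRing 𝕜 k ⧸ Ideal.span {xIcc 𝕜 k 1 i}) →ₗ[NodalRing 𝕜 k]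
              (NodalRing 𝕜 k ⧸ Ideal.span {xIcc 𝕜 k 1 j})) ⧸ LinearMap.range T))
          ≃ₗ[NodalRing 𝕜 k]
          (NodalRing 𝕜 k ⧸
            Ideal.span {(Ideal.Quotient.mk _ (X (⟨i - 1, by omega⟩ : Fin k)) :
              NodalRing 𝕜 k)}))) ∧
      (j < i → Function.Surjective T) := by
  classical
  have hii1 : i - 1 + 1 = i := by omega
  -- splitting facts in the polynomial ring
  have hPii : P 𝕜 k i i = X (⟨i - 1, by omega⟩ : Fin k) := P_single (by omega) hik
  have hsplit1 : P 𝕜 k 1 (i - 1) * P 𝕜 k i i = P 𝕜 k 1 i := by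
    have := P_split (𝕜 := 𝕜) (k := k) (a := 1) (b := i - 1) (c := i) (by omega) (by omega)
    rwa [hii1] at this
  -- the projection π
  have hπker : Ideal.span {xIcc 𝕜 k 1 i} ≤
      LinearMap.ker (Ideal.span {xIcc 𝕜 k 1 (i - 1)}).mkQ := by
    rw [Submodule.ker_mkQ, Ideal.span_le, Set.singleton_subset_iff]
    rw [xIcc_eq, SetLike.mem_coe, xIcc_eq, mk_mem_span_iff (by omega)]
    exact ⟨P 𝕜 k i i, by rw [mul_comm]; exact hsplit1.symm⟩
  set πm : (NodalRing 𝕜 k ⧸ Ideal.span {xIcc 𝕜 k 1 i}) →ₗ[NodalRing 𝕜 k]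
      (NodalRing 𝕜 k ⧸ Ideal.span {xIcc 𝕜 k 1 (i - 1)}) :=
    Submodule.liftQ _ (Ideal.span {xIcc 𝕜 k 1 (i - 1)}).mkQ hπker with hπm
  set Tm := LinearMap.lcomp (NodalRing 𝕜 k)
    (NodalRing 𝕜 k ⧸ Ideal.span {xIcc 𝕜 k 1 j}) πm with hTm
  refine ⟨πm, Tm, fun s => rfl, fun φ => rfl, ?_, ?_⟩
  · -- case i ≤ j
    intro hij
    have hsplit2 : P 𝕜 k 1 i * P 𝕜 k (i + 1) j = P 𝕜 k 1 j := P_split (by omega) hij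
    have hsplit3 : P 𝕜 k 1 (i - 1) * P 𝕜 k i j = P 𝕜 k 1 j := by
      have := P_split (𝕜 := 𝕜) (k := k) (a := 1) (b := i - 1) (c := j) (by omega) (by omega)
      rwa [hii1] at this
    have hsplit4 : P 𝕜 k i i * P 𝕜 k (i + 1) j = P 𝕜 k i j := P_split (by omega) hij
    set Xi : MvPolynomial (Fin k) 𝕜 := X (⟨i - 1, by omega⟩ : Fin k) with hXidef
    have hXiP : Xi * P 𝕜 k (i + 1) j = P 𝕜 k i j := by rw [← hPii]; exact hsplit4
    have he : ∃ r, P 𝕜 k (i + 1) j * P 𝕜 k 1 i = r * P 𝕜 k 1 j :=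
      ⟨1, by rw [one_mul, ← hsplit2]; ring⟩
    have hφ' : ∃ r, P 𝕜 k i j * P 𝕜 k 1 (i - 1) = r * P 𝕜 k 1 j :=
      ⟨1, by rw [one_mul, ← hsplit3]; ring⟩
    set e := mulMap (P 𝕜 k (i + 1) j) hjk he with hedef
    set Em := LinearMap.toSpanSingleton (NodalRing 𝕜 k) _ e with hEm
    set F := (LinearMap.range Tm).mkQ ∘ₗ Em with hF
    -- `T φ' = X_i • e`
    have hTφ' : Tm (mulMap (P 𝕜 k i j) hjk hφ') =
        (Ideal.Quotient.mk _ Xi : NodalRing 𝕜 k) • e := by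
      apply LinearMap.ext
      intro x
      obtain ⟨s, rfl⟩ := Mq_surj x
      have hL : Tm (mulMap (P 𝕜 k i j) hjk hφ')
          (Submodule.Quotient.mk (Ideal.Quotient.mk _ s)) =
          Submodule.Quotient.mk (Ideal.Quotient.mk _ (P 𝕜 k i j * s)) := by
        rw [hTm, LinearMap.lcomp_apply]
        have hπs : πm (Submodule.Quotient.mk (Ideal.Quotient.mk _ s)) =
            (Submodule.Quotient.mk (Ideal.Quotient.mk _ s) :
              NodalRing 𝕜 k ⧸ Ideal.span {xIcc 𝕜 k 1 (i - 1)}) := rfl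
        rw [hπs, mulMap_apply]
      rw [hL, LinearMap.smul_apply, hedef, mulMap_apply, smul_qmk]
      congr 2
      linear_combination s * hXiP.symm
    -- `F` is surjective
    have hFsurj : Function.Surjective F := by
      intro y
      obtain ⟨φ, rfl⟩ := Submodule.Quotient.mk_surjective _ y
      obtain ⟨u, hu⟩ := Mq_surj (φ (Submodule.Quotient.mk (Ideal.Quotient.mk _ 1)))
      have h1 : φ (Submodule.Quotient.mk (Ideal.Quotient.mk _ (P 𝕜 k 1 i))) = 0 := by
        rw [show (Submodule.Quotient.mk (Ideal.Quotient.mk _ (P 𝕜 k 1 i)) :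
          NodalRing 𝕜 k ⧸ Ideal.span {xIcc 𝕜 k 1 i}) = 0 from qmk_P_eq_zero hik, map_zero]
      rw [apply_qmk, ← hu, smul_qmk, qmk_eq_zero_iff hjk] at h1
      obtain ⟨r, hr⟩ := h1
      have hu2 : u = r * P 𝕜 k (i + 1) j := by
        apply P_regular (a := 1) (b := i)
        linear_combination hr - r * hsplit2
      refine ⟨Ideal.Quotient.mk _ r, ?_⟩
      rw [hF, LinearMap.comp_apply, Submodule.mkQ_apply]
      congr 1
      apply LinearMap.ext
      intro x
      obtain ⟨s, rfl⟩ := Mq_surj x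
      rw [hEm, LinearMap.toSpanSingleton_apply, LinearMap.smul_apply, hedef, mulMap_apply,
        smul_qmk, apply_qmk, ← hu, smul_qmk]
      congr 2
      rw [hu2]
      ring
    -- kernel of `F`
    have hker : LinearMap.ker F = Ideal.span
        {(Ideal.Quotient.mk _ Xi : NodalRing 𝕜 k)} := by
      apply le_antisymm
      · intro x hx
        obtain ⟨a, rfl⟩ := Ideal.Quotient.mk_surjective
          (I := Ideal.span {∏ t : Fin k, (X t : MvPolynomial (Fin k) 𝕜)}) x
        rw [LinearMap.mem_ker, hF, LinearMap.comp_apply, Submodule.mkQ_apply,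
          Submodule.Quotient.mk_eq_zero] at hx
        obtain ⟨ψ, hψ⟩ := hx
        obtain ⟨n, hn⟩ := Mq_surj (ψ (Submodule.Quotient.mk (Ideal.Quotient.mk _ 1)))
        have hL : Tm ψ (Submodule.Quotient.mk (Ideal.Quotient.mk _ 1)) =
            Submodule.Quotient.mk (Ideal.Quotient.mk _ n) := by rw [hn]; rfl
        have hR := LinearMap.congr_fun hψ (Submodule.Quotient.mk (Ideal.Quotient.mk _ 1))
        rw [hL, hEm, LinearMap.toSpanSingleton_apply, LinearMap.smul_apply, hedef,
          mulMap_apply, smul_qmk, qmk_eq_iff hjk] at hR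
        obtain ⟨r', hr'⟩ := hR
        have h2 : ψ (Submodule.Quotient.mk (Ideal.Quotient.mk _ (P 𝕜 k 1 (i - 1)))) = 0 := by
          rw [show (Submodule.Quotient.mk (Ideal.Quotient.mk _ (P 𝕜 k 1 (i - 1))) :
            NodalRing 𝕜 k ⧸ Ideal.span {xIcc 𝕜 k 1 (i - 1)}) = 0 from
            qmk_P_eq_zero (by omega), map_zero]
        rw [apply_qmk, ← hn, smul_qmk, qmk_eq_zero_iff hjk] at h2
        obtain ⟨c, hc⟩ := h2
        have step1 : (a * P 𝕜 k (i + 1) j) * P 𝕜 k 1 (i - 1) =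
            ((c - r' * P 𝕜 k 1 (i - 1)) * P 𝕜 k i j) * P 𝕜 k 1 (i - 1) := by
          linear_combination (-(P 𝕜 k 1 (i - 1))) * hr' + hc -
            (c - r' * P 𝕜 k 1 (i - 1)) * hsplit3
        have step2 := P_regular step1
        have step3 : a * P 𝕜 k (i + 1) j =
            ((c - r' * P 𝕜 k 1 (i - 1)) * Xi) * P 𝕜 k (i + 1) j := by
          rw [step2, ← hXiP]; ring
        have step4 := P_regular step3
        rw [Ideal.mem_span_singleton]
        exact ⟨Ideal.Quotient.mk _ (c - r' * P 𝕜 k 1 (i - 1)),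
          by rw [← map_mul]; congr 1; rw [step4]; ring⟩
      · rw [Ideal.span_le, Set.singleton_subset_iff, SetLike.mem_coe, LinearMap.mem_ker,
          hF, LinearMap.comp_apply, hEm, LinearMap.toSpanSingleton_apply,
          Submodule.mkQ_apply, Submodule.Quotient.mk_eq_zero]
        exact ⟨mulMap (P 𝕜 k i j) hjk hφ', hTφ'⟩
    exact ⟨((F.quotKerEquivOfSurjective hFsurj).symm).trans
      (Submodule.quotEquivOfEq _ _ hker)⟩
  · -- case j < i : surjectivity
    intro hji ψ
    have hker2 : Ideal.span {xIcc 𝕜 k 1 (i - 1)} ≤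
        LinearMap.ker (ψ ∘ₗ (Ideal.span {xIcc 𝕜 k 1 i}).mkQ) := by
      rw [Ideal.span_le, Set.singleton_subset_iff, SetLike.mem_coe, LinearMap.mem_ker,
        LinearMap.comp_apply, Submodule.mkQ_apply, xIcc_eq 1 (i-1), apply_qmk]
      obtain ⟨u, hu⟩ := Mq_surj (ψ (Submodule.Quotient.mk (Ideal.Quotient.mk _ 1)))
      rw [← hu, smul_qmk, qmk_eq_zero_iff hjk]
      have := P_split (𝕜 := 𝕜) (k := k) (a := 1) (b := j) (c := i - 1) (by omega) (by omega)
      exact ⟨P 𝕜 k (j + 1) (i - 1) * u, by rw [← this]; ring⟩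
    refine ⟨Submodule.liftQ _ (ψ ∘ₗ (Ideal.span {xIcc 𝕜 k 1 i}).mkQ) hker2, ?_⟩
    apply LinearMap.ext
    intro x
    obtain ⟨s, rfl⟩ := Submodule.Quotient.mk_surjective _ x
    rfl
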